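/- arXiv:1405.0370 — 2 statements merged into one kernel-verified Lean document; each statement's English description precedes it below -/
import Mathlib

section
/- Let φ : ℂ^n → ℂ^n be a mapping each of whose components is a polynomial, and suppose its Jacobian determinant det J_φ is not identically zero. Then there exists a finite m ∈ ℕ such that for every y ∈ ℂ^n, the set φ^{-1}({y}) ∩ {z : det J_φ(z) ≠ 0} contains at most m elements. -/
open MvPolynomial

lemma le_sum_nat {k : ℕ} (s : Fin k →₀ ℕ) (i : Fin k) : s i ≤ s.sum fun _ e => e := by
  classical
  by_cases h : i ∈ s.support
  · exact Finset.single_le_sum (fun j _ => Nat.zero_le _) h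
  · simp [Finsupp.notMem_support_iff.mp h]

lemma finite_bddSum (k D : ℕ) : Finite {s : Fin k →₀ ℕ // (s.sum fun _ e => e) ≤ D} := by
  refine Finite.of_injective (fun s => (fun i => (⟨s.1 i, Nat.lt_succ_of_le ((le_sum_nat s.1 i).trans s.2)⟩ : Fin (D+1)))) ?_
  intro s t hst
  ext i
  exact congrArg Fin.val (congrFun hst i)

lemma card_bddSum_le (k D : ℕ) :
    Nat.card {s : Fin k →₀ ℕ // (s.sum fun _ e => e) ≤ D} ≤ (D+1)^k := by
  have h := Nat.card_le_card_of_injective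
    (fun s : {s : Fin k →₀ ℕ // (s.sum fun _ e => e) ≤ D} =>
      (fun i => (⟨s.1 i, Nat.lt_succ_of_le ((le_sum_nat s.1 i).trans s.2)⟩ : Fin (D+1))))
    (by intro s t hst; ext i; exact congrArg Fin.val (congrFun hst i))
  simpa using h

lemma card_bddSum_ge (k M : ℕ) :
    (M+1)^k ≤ Nat.card {s : Fin k →₀ ℕ // (s.sum fun _ e => e) ≤ k * M} := by
  haveI := finite_bddSum k (k*M)
  have h := Nat.card_le_card_of_injective
    (fun f : Fin k → Fin (M+1) =>
      (⟨Finsupp.equivFunOnFinite.symm (fun i => (f i : ℕ)), by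
        rw [Finsupp.sum_fintype _ _ (fun _ => rfl)]
        calc ∑ i : Fin k, (Finsupp.equivFunOnFinite.symm (fun i => ((f i : ℕ))) i)
            = ∑ i : Fin k, ((f i : ℕ)) := by rfl
          _ ≤ ∑ _i : Fin k, M := Finset.sum_le_sum fun i _ => Fin.is_le _
          _ = k * M := by simp [Finset.sum_const, mul_comm]⟩ :
        {s : Fin k →₀ ℕ // (s.sum fun _ e => e) ≤ k * M}))
    (by
      intro f g hfg
      funext i
      have := congrArg (fun s => (s.1 : (Fin k →₀ ℕ)) i) hfg
      simp [Finsupp.equivFunOnFinite] at this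
      exact Fin.ext this)
  simpa using h

lemma exists_annihilator (n : ℕ) (v : Fin (n+1) → MvPolynomial (Fin n) ℂ) :
    ∃ Q : MvPolynomial (Fin (n+1)) ℂ, Q ≠ 0 ∧ aeval v Q = 0 := by
  classical
  by_contra hcon
  push_neg at hcon
  -- the aeval map is injective as a linear map
  have hker : LinearMap.ker (aeval v : MvPolynomial (Fin (n+1)) ℂ →ₐ[ℂ] _).toLinearMap = ⊥ :=
    LinearMap.ker_eq_bot'.2 fun p hp => by
      by_contra hne
      exact hcon p hne hp
  set d : ℕ := (Finset.univ.sup fun i => (v i).totalDegree) + 1 with hd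
  have hvd : ∀ i, (v i).totalDegree ≤ d := fun i => by
    have := Finset.le_sup (f := fun i => (v i).totalDegree) (Finset.mem_univ i)
    omega
  set c : ℕ := d * (n+1) + 1 with hc
  set M : ℕ := c ^ n with hM
  set N : ℕ := (n+1) * M with hN
  set D : ℕ := d * N with hD
  -- index types
  set S := {s : Fin (n+1) →₀ ℕ // (s.sum fun _ e => e) ≤ N} with hS
  set T := {s : Fin n →₀ ℕ // (s.sum fun _ e => e) ≤ D} with hT
  haveI : Finite S := finite_bddSum _ _
  haveI : Finite T := finite_bddSum _ _
  haveI : Fintype S := Fintype.ofFinite S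
  haveI : Fintype T := Fintype.ofFinite T
  -- the family of images of monomials indexed by S is linearly independent
  have hmono : LinearIndependent ℂ (fun s : S => (monomial s.1 (1:ℂ))) := by
    have h1 := (basisMonomials (Fin (n+1)) ℂ).linearIndependent
    have h2 := h1.comp (fun s : S => s.1) Subtype.val_injective
    have h3 : ((basisMonomials (Fin (n+1)) ℂ) ∘ fun s : S => s.1) = fun s : S => monomial s.1 (1:ℂ) := by
      ext s : 1
      simp [coe_basisMonomials]
    rw [h3] at h2
    exact h2
  have hli : LinearIndependent ℂ (fun s : S =>
      (aeval v : MvPolynomial (Fin (n+1)) ℂ →ₐ[ℂ] _).toLinearMap (monomial s.1 (1:ℂ))) :=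
    hmono.map' _ hker
  -- each image lies in the degree ≤ D submodule
  have hmem : ∀ s : S, aeval v (monomial s.1 (1:ℂ)) ∈ restrictTotalDegree (Fin n) ℂ D := by
    intro s
    rw [mem_restrictTotalDegree]
    rw [aeval_monomial]
    calc ((algebraMap ℂ (MvPolynomial (Fin n) ℂ)) 1 * s.1.prod fun i k => v i ^ k).totalDegree
        = (s.1.prod fun i k => v i ^ k).totalDegree := by simp
      _ ≤ ∑ i ∈ s.1.support, (v i ^ s.1 i).totalDegree := totalDegree_finset_prod _ _
      _ ≤ ∑ i ∈ s.1.support, s.1 i * d := Finset.sum_le_sum fun i _ =>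
            (totalDegree_pow _ _).trans (Nat.mul_le_mul_left _ (hvd i))
      _ = (s.1.sum fun _ e => e) * d := by rw [← Finset.sum_mul]; rfl
      _ ≤ N * d := Nat.mul_le_mul_right _ s.2
      _ = D := by rw [hD, mul_comm]
  -- lift to the submodule
  set W := restrictTotalDegree (Fin n) ℂ D with hW
  have hli' : LinearIndependent ℂ (fun s : S =>
      (⟨aeval v (monomial s.1 (1:ℂ)), hmem s⟩ : W)) := by
    apply LinearIndependent.of_comp W.subtype
    exact hli
  -- basis of W indexed by T
  have hbasis : Module.Basis T ℂ W := by
    have := basisRestrictSupport ℂ { t : Fin n →₀ ℕ | (t.sum fun _ e => e) ≤ D }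
    exact this
  have hcard : Fintype.card S ≤ Fintype.card T :=
    hbasis.card_le_card_of_linearIndependent hli'
  -- numerical contradiction
  have h1 : (M+1)^(n+1) ≤ Nat.card S := by
    have := card_bddSum_ge (n+1) M
    rwa [← hN] at this
  have h2 : Nat.card T ≤ (D+1)^n := card_bddSum_le _ _
  have h3 : Nat.card S ≤ Nat.card T := by
    rw [Nat.card_eq_fintype_card, Nat.card_eq_fintype_card]; exact hcard
  have hDc : D + 1 ≤ c * (M+1) := by
    have : D = d * (n+1) * M := by rw [hD, hN]; ring
    rw [this, hc]
    nlinarith [Nat.zero_le M]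
  have hfinal : (D+1)^n < (M+1)^(n+1) := by
    calc (D+1)^n ≤ (c*(M+1))^n := Nat.pow_le_pow_left hDc n
      _ = c^n * (M+1)^n := mul_pow _ _ _
      _ = M * (M+1)^n := by rw [hM]
      _ < (M+1) * (M+1)^n := by
        have hp : 0 < (M+1)^n := Nat.pow_pos (Nat.succ_pos M)
        exact Nat.mul_lt_mul_of_lt_of_le (Nat.lt_succ_self M) le_rfl hp
      _ = (M+1)^(n+1) := by ring
  omega

lemma eq_zero_of_vanish_on_prod : ∀ (n : ℕ) (S : Fin n → Set ℂ), (∀ i, (S i).Infinite) →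
    ∀ (c : MvPolynomial (Fin n) ℂ), (∀ y : Fin n → ℂ, (∀ i, y i ∈ S i) → eval y c = 0) → c = 0 := by
  intro n
  induction n with
  | zero =>
    intro S hS c h
    have h0 : eval (fun i : Fin 0 => i.elim0) c = 0 := h _ (fun i => i.elim0)
    have hc : c = C (eval (fun i : Fin 0 => i.elim0) c) := by
      obtain ⟨a, rfl⟩ := (MvPolynomial.C_surjective (Fin 0)) c
      simp
    rw [hc, h0, map_zero]
  | succ n ih =>
    intro S hS c h
    set R := finSuccEquiv ℂ n c with hR
    have hcoeff : ∀ k, R.coeff k = 0 := by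
      intro k
      apply ih (fun i => S i.succ) (fun i => hS i.succ)
      intro y hy
      have hzero : R.map (eval y) = 0 := by
        apply Polynomial.eq_zero_of_infinite_isRoot
        apply (hS 0).mono
        intro a ha
        have hev := h (Fin.cons a y) (by
          intro i
          refine Fin.cases ?_ ?_ i
          · simpa using ha
          · intro j; simpa using hy j)
        rw [eval_eq_eval_mv_eval'] at hev
        exact hev
      have := congrArg (fun p => Polynomial.coeff p k) hzero
      simpa [Polynomial.coeff_map] using this
    have hR0 : R = 0 := Polynomial.ext fun k => by simp [hcoeff k]
    apply (finSuccEquiv ℂ n).injective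
    rw [map_zero, ← hR, hR0]

lemma ball_infinite (z : ℂ) {r : ℝ} (hr : 0 < r) : (Metric.ball z r).Infinite := by
  apply Set.infinite_of_injective_forall_mem
    (f := fun m : ℕ => z + ((r/((m:ℝ)+2) : ℝ) : ℂ))
  case hi =>
    intro a b hab
    simp only [add_right_inj, Complex.ofReal_inj] at hab
    have ha : (0:ℝ) < (a:ℝ)+2 := by positivity
    have hb : (0:ℝ) < (b:ℝ)+2 := by positivity
    rw [div_eq_div_iff ha.ne' hb.ne'] at hab
    have : (a:ℝ) = b := by
      have := mul_left_cancel₀ hr.ne' hab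
      linarith
    exact_mod_cast this
  case hf =>
    intro m
    simp only [Metric.mem_ball, dist_eq_norm, add_sub_cancel_left, Complex.norm_real,
      Real.norm_eq_abs]
    rw [abs_of_pos (by positivity)]
    apply div_lt_self hr
    have : (0:ℝ) ≤ (m:ℝ) := Nat.cast_nonneg m
    linarith

lemma exists_nonvanishing {n : ℕ} {c : MvPolynomial (Fin n) ℂ} (hc : c ≠ 0)
    {U : Set (Fin n → ℂ)} (hU : IsOpen U) (hne : U.Nonempty) :
    ∃ y ∈ U, eval y c ≠ 0 := by
  by_contra hcon
  push_neg at hcon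
  obtain ⟨x, hx⟩ := hne
  obtain ⟨r, hr, hball⟩ := Metric.isOpen_iff.1 hU x hx
  apply hc
  apply eq_zero_of_vanish_on_prod n (fun i => Metric.ball (x i) r)
    (fun i => ball_infinite (x i) hr)
  intro y hy
  apply hcon
  apply hball
  rw [ball_pi _ hr]
  exact fun i _ => hy i

lemma hasStrictFDerivAt_eval {n : ℕ} (z : Fin n → ℂ) (p : MvPolynomial (Fin n) ℂ) :
    HasStrictFDerivAt (fun w : Fin n → ℂ => eval w p)
      (∑ j : Fin n, eval z (pderiv j p) •
        (ContinuousLinearMap.proj j : (Fin n → ℂ) →L[ℂ] ℂ)) z := by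
  induction p using MvPolynomial.induction_on with
  | C a =>
    have h0 : (∑ j : Fin n, eval z (pderiv j (C a : MvPolynomial (Fin n) ℂ)) •
        (ContinuousLinearMap.proj j : (Fin n → ℂ) →L[ℂ] ℂ)) = 0 := by
      ext w
      simp
    rw [h0]
    simpa using hasStrictFDerivAt_const (eval z (C a : MvPolynomial (Fin n) ℂ)) z
  | add p q hp hq =>
    have h := hp.add hq
    refine (congrArg₂ (fun (f : (Fin n → ℂ) → ℂ) (f' : (Fin n → ℂ) →L[ℂ] ℂ) => HasStrictFDerivAt f f' z) ?_ ?_).mpr h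
    · funext w; simp
    · ext w
      simp [map_add, add_mul, Finset.sum_add_distrib]
  | mul_X p i hp =>
    have hX : HasStrictFDerivAt (fun w : Fin n → ℂ => w i)
        ((ContinuousLinearMap.proj i : (Fin n → ℂ) →L[ℂ] ℂ)) z := hasStrictFDerivAt_apply i z
    have h := hp.mul hX
    refine (congrArg₂ (fun (f : (Fin n → ℂ) → ℂ) (f' : (Fin n → ℂ) →L[ℂ] ℂ) => HasStrictFDerivAt f f' z) ?_ ?_).mpr h
    · funext w; simp
    · ext w
      simp only [ContinuousLinearMap.coe_sum', Finset.sum_apply, ContinuousLinearMap.coe_smul',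
        Pi.smul_apply, ContinuousLinearMap.proj_apply, ContinuousLinearMap.add_apply,
        smul_eq_mul, pderiv_mul, map_add, map_mul, eval_X]
      rw [Finset.sum_congr rfl (fun j _ => by rw [add_mul]), Finset.sum_add_distrib]
      have h1 : ∑ j : Fin n, eval z p * eval z (pderiv j (X i : MvPolynomial (Fin n) ℂ)) * w j
          = eval z p * w i := by
        classical
        rw [Finset.sum_eq_single i]
        · simp
        · intro b _ hb
          rw [pderiv_X_of_ne hb.symm]
          simp
        · intro hi; exact absurd (Finset.mem_univ i) hi
      have h2 : ∑ j : Fin n, eval z (pderiv j p) * z i * w j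
          = z i * ∑ j : Fin n, eval z (pderiv j p) * w j := by
        rw [Finset.mul_sum]
        exact Finset.sum_congr rfl fun j _ => by ring
      rw [h1, h2, add_comm]

lemma map_nhds_eval {n : ℕ} (P : Fin n → MvPolynomial (Fin n) ℂ)
    (φ : (Fin n → ℂ) → (Fin n → ℂ)) (hφ : ∀ z i, φ z i = eval z (P i))
    (J : (Fin n → ℂ) → Matrix (Fin n) (Fin n) ℂ)
    (hJ : ∀ z i j, J z i j = eval z (pderiv j (P i)))
    (z : Fin n → ℂ) (hz : (J z).det ≠ 0) :
    Filter.map φ (nhds z) = nhds (φ z) := by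
  haveI hInv := (J z).invertibleOfIsUnitDet (isUnit_iff_ne_zero.2 hz)
  let e₀ : (Fin n → ℂ) ≃ₗ[ℂ] (Fin n → ℂ) := (J z).toLinearEquiv' hInv
  let e : (Fin n → ℂ) ≃L[ℂ] (Fin n → ℂ) := e₀.toContinuousLinearEquiv
  have hFd : HasStrictFDerivAt φ (e : (Fin n → ℂ) →L[ℂ] (Fin n → ℂ)) z := by
    rw [hasStrictFDerivAt_pi']
    intro i
    have hd := hasStrictFDerivAt_eval z (P i)
    have hfun : (fun x => φ x i) = fun w => eval w (P i) := funext fun w => hφ w i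
    rw [hfun]
    refine (congrArg (fun f' : (Fin n → ℂ) →L[ℂ] ℂ => HasStrictFDerivAt (fun w => eval w (P i)) f' z) ?_).mpr hd
    ext w
    have he : (e : (Fin n → ℂ) →L[ℂ] (Fin n → ℂ)) w = (J z).mulVec w := by
      have h2 : e₀ w = Matrix.toLin' (J z) w :=
        DFunLike.congr_fun (Matrix.toLinearEquiv'_apply (J z) hInv) w
      calc (e : (Fin n → ℂ) →L[ℂ] (Fin n → ℂ)) w = e₀ w := rfl
        _ = Matrix.toLin' (J z) w := h2
        _ = (J z).mulVec w := Matrix.toLin'_apply _ _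
    simp only [ContinuousLinearMap.comp_apply, ContinuousLinearMap.proj_apply, he,
      ContinuousLinearMap.coe_sum', Finset.sum_apply, ContinuousLinearMap.coe_smul',
      Pi.smul_apply, smul_eq_mul]
    simp only [Matrix.mulVec, dotProduct]
    exact Finset.sum_congr rfl fun j _ => by rw [hJ z i j]
  exact hFd.map_nhds_eq_of_equiv

/-- A polynomial map `φ : ℂ^n → ℂ^n` whose Jacobian determinant is not
identically zero is uniformly finite-to-one on the set where the Jacobian
determinant is nonzero. -/
theorem polynomial_map_finite_to_one (n : ℕ)
    (P : Fin n → MvPolynomial (Fin n) ℂ)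
    (φ : (Fin n → ℂ) → (Fin n → ℂ))
    (hφ : ∀ z i, φ z i = MvPolynomial.eval z (P i))
    (J : (Fin n → ℂ) → Matrix (Fin n) (Fin n) ℂ)
    (hJ : ∀ z i j, J z i j = MvPolynomial.eval z (MvPolynomial.pderiv j (P i)))
    (hJne : ∃ z, (J z).det ≠ 0) :
    ∃ m : ℕ, ∀ y : Fin n → ℂ,
      ({z : Fin n → ℂ | φ z = y ∧ (J z).det ≠ 0}).Finite ∧
        ({z : Fin n → ℂ | φ z = y ∧ (J z).det ≠ 0}).ncard ≤ m := by
  classical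
  have hQ : ∀ i : Fin n, ∃ Q : MvPolynomial (Fin (n+1)) ℂ, Q ≠ 0 ∧
      aeval (Fin.cons (X i) P) Q = 0 := fun i => exists_annihilator n (Fin.cons (X i) P)
  choose Q hQ0 hQa using hQ
  set R : Fin n → Polynomial (MvPolynomial (Fin n) ℂ) := fun i => finSuccEquiv ℂ n (Q i)
    with hRdef
  have hR0 : ∀ i, R i ≠ 0 := fun i h => hQ0 i (by
    apply (finSuccEquiv ℂ n).injective
    rw [map_zero]; exact h)
  set m : ℕ := ∏ i : Fin n, (R i).natDegree with hm
  set c : MvPolynomial (Fin n) ℂ := ∏ i : Fin n, (R i).leadingCoeff with hcdef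
  have hc0 : c ≠ 0 :=
    Finset.prod_ne_zero_iff.2 fun i _ => Polynomial.leadingCoeff_ne_zero.2 (hR0 i)
  -- key evaluation identity
  have hkey : ∀ (z : Fin n → ℂ) (i : Fin n),
      Polynomial.eval (z i) ((R i).map (eval (φ z))) = 0 := by
    intro z i
    have h2 : eval z (aeval (Fin.cons (X i) P) (Q i)) = 0 := by rw [hQa i, map_zero]
    rw [aeval_def, MvPolynomial.algebraMap_eq, ← eval_assoc] at h2
    have harg : (⇑(eval z) ∘ Fin.cons (X i) P) = Fin.cons (z i) (φ z) := by
      funext j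
      refine Fin.cases ?_ ?_ j
      · simp
      · intro k; simp [hφ]
    rw [harg] at h2
    show Polynomial.eval (z i) ((finSuccEquiv ℂ n (Q i)).map (eval (φ z))) = 0
    rw [← eval_eq_eval_mv_eval', h2]
  -- bound over points where `c` does not vanish
  have hgood : ∀ y : Fin n → ℂ, eval y c ≠ 0 → ∀ s : Finset (Fin n → ℂ),
      (∀ z ∈ s, φ z = y) → s.card ≤ m := by
    intro y hy s hs
    have hmapne : ∀ i, (R i).map (eval y) ≠ 0 := by
      intro i h
      have hic : eval y ((R i).leadingCoeff) ≠ 0 := by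
        intro h0
        apply hy
        rw [hcdef, eval_prod]
        exact Finset.prod_eq_zero (Finset.mem_univ i) h0
      apply hic
      have h3 := congrArg (fun p => Polynomial.coeff p ((R i).natDegree)) h
      simp only [Polynomial.coeff_map, Polynomial.coeff_zero] at h3
      rw [Polynomial.leadingCoeff]
      exact h3
    have hsub : s ⊆ Fintype.piFinset fun i => ((R i).map (eval y)).roots.toFinset := by
      intro z hz
      rw [Fintype.mem_piFinset]
      intro i
      rw [Multiset.mem_toFinset, Polynomial.mem_roots (hmapne i)]
      have := hkey z i
      rw [hs z hz] at this
      exact this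
    calc s.card ≤ (Fintype.piFinset fun i => ((R i).map (eval y)).roots.toFinset).card :=
          Finset.card_le_card hsub
      _ = ∏ i : Fin n, ((R i).map (eval y)).roots.toFinset.card := Fintype.card_piFinset _
      _ ≤ ∏ i : Fin n, (R i).natDegree := Finset.prod_le_prod' fun i _ =>
          (Multiset.toFinset_card_le _).trans
            ((Polynomial.card_roots' _).trans Polynomial.natDegree_map_le)
      _ = m := hm.symm
  -- bound over all fibers
  have hbound : ∀ y : Fin n → ℂ, ∀ t : Finset (Fin n → ℂ),
      (∀ z ∈ t, φ z = y ∧ (J z).det ≠ 0) → t.card ≤ m := by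
    intro y t ht
    by_contra hlt
    push_neg at hlt
    obtain ⟨U, hU, hUdisj⟩ := t.finite_toSet.t2_separation
    have hmapnhds : ∀ z ∈ t, Filter.map φ (nhds z) = nhds y := by
      intro z hz
      have := map_nhds_eval P φ hφ J hJ z (ht z hz).2
      rwa [(ht z hz).1] at this
    have hWnhds : (⋂ z ∈ t, φ '' (U z)) ∈ nhds y := by
      refine (Filter.biInter_finset_mem t).2 ?_
      intro z hz
      rw [← hmapnhds z hz, Filter.mem_map]
      exact Filter.mem_of_superset ((hU z).2.mem_nhds (hU z).1)
        (Set.subset_preimage_image φ (U z))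
    obtain ⟨O, hOsub, hOopen, hyO⟩ := mem_nhds_iff.1 hWnhds
    obtain ⟨y', hy'O, hy'c⟩ := exists_nonvanishing hc0 hOopen ⟨y, hyO⟩
    have hy'mem : ∀ z ∈ t, ∃ x, x ∈ U z ∧ φ x = y' := by
      intro z hz
      have hmem := hOsub hy'O
      rw [Set.mem_iInter₂] at hmem
      obtain ⟨x, hx1, hx2⟩ := hmem z hz
      exact ⟨x, hx1, hx2⟩
    choose! x hx1 hx2 using hy'mem
    have hinj : Set.InjOn x t := by
      intro a ha b hb hab
      by_contra hne
      have hd := hUdisj (by exact_mod_cast ha) (by exact_mod_cast hb) hne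
      exact (Set.disjoint_left.1 hd) (hx1 a ha) (hab ▸ hx1 b hb)
    have himg : ∀ w ∈ t.image x, φ w = y' := by
      intro w hw
      obtain ⟨a, ha, rfl⟩ := Finset.mem_image.1 hw
      exact hx2 a ha
    have hcard := hgood y' hy'c (t.image x) himg
    rw [Finset.card_image_of_injOn hinj] at hcard
    omega
  refine ⟨m, fun y => ?_⟩
  have hfin : ({z : Fin n → ℂ | φ z = y ∧ (J z).det ≠ 0}).Finite := by
    by_contra hinf
    have hinf' : ({z : Fin n → ℂ | φ z = y ∧ (J z).det ≠ 0}).Infinite := hinf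
    obtain ⟨t, hts, htfin, htcard⟩ := hinf'.exists_subset_ncard_eq (m+1)
    have hb := hbound y htfin.toFinset (fun z hz => hts (htfin.mem_toFinset.1 hz))
    rw [Set.ncard_eq_toFinset_card t htfin] at htcard
    omega
  refine ⟨hfin, ?_⟩
  by_contra hgt
  push_neg at hgt
  obtain ⟨t, hts, htcard⟩ := Set.exists_subset_card_eq (Nat.succ_le_of_lt hgt)
  have htfin : t.Finite := hfin.subset hts
  have hb := hbound y htfin.toFinset (fun z hz => hts (htfin.mem_toFinset.1 hz))
  rw [Set.ncard_eq_toFinset_card t htfin] at htcard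
  omega
end

section
/- Let M, N be positive integers with Q = 2M+1 < N. Define p_m = (1/√2) e^{−jπ m/(2N)} sinc(m/(2N)) c_m with c_m > 0 for m = −M,…,M, and Q_o, Q_e the N × Q matrices with entries e^{jπ m (2k−1)/N} and e^{jπ m (2k)/N} respectively (k=1,…,N, m=−M,…,M). Then for almost every x₁ ∈ ℂ there exist ŝ ∈ ℂ^Q and x₂,…,x_N ∈ ℂ such that the (N+Q−1) × (N+Q−1) Jacobian matrix J_{φ_{x₁}}(ŝ, x_{2:N}) given in equation (61) of the paper (of the map (ŝ, x_{2:N}) ↦ first N+Q−1 entries of (diag(x) Q_o diag(p) ŝ, diag(x) Q_e diag(p) ŝ)) has nonzero determinant. -/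
open Complex Matrix

noncomputable def sinc (x : ℝ) : ℝ :=
  if x = 0 then 1 else Real.sin (Real.pi * x) / (Real.pi * x)

/-- `p_m = (1/√2) e^{−jπ m/(2N)} sinc(m/(2N)) c_m`, indexed by `m = −M,…,M`
via `m ↦ (m : Fin (2M+1)) - M`. -/
noncomputable def pvec (N M : ℕ) (c : Fin (2 * M + 1) → ℝ)
    (m : Fin (2 * M + 1)) : ℂ :=
  (1 / Real.sqrt 2 : ℂ) *
    Complex.exp (-I * Real.pi * (((m : ℕ) : ℂ) - (M : ℂ)) / (2 * N)) *
    (sinc ((((m : ℕ) : ℝ) - (M : ℝ)) / (2 * N)) : ℂ) * (c m : ℂ)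

/-- `Q_o` with entries `e^{jπ m (2k−1)/N}`, `k = 1,…,N`, `m = −M,…,M`. -/
noncomputable def Qodd (N M : ℕ) : Matrix (Fin N) (Fin (2 * M + 1)) ℂ :=
  Matrix.of fun k m =>
    Complex.exp (I * Real.pi * (((m : ℕ) : ℂ) - (M : ℂ)) *
      (2 * ((k : ℕ) + 1) - 1) / (N : ℂ))

/-- `Q_e` with entries `e^{jπ m (2k)/N}`, `k = 1,…,N`, `m = −M,…,M`. -/
noncomputable def Qeven (N M : ℕ) : Matrix (Fin N) (Fin (2 * M + 1)) ℂ :=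
  Matrix.of fun k m =>
    Complex.exp (I * Real.pi * (((m : ℕ) : ℂ) - (M : ℂ)) *
      (2 * ((k : ℕ) + 1)) / (N : ℂ))

/-- The input vector `x = (x₁, x₂, …, x_N)`. -/
def xvec (N : ℕ) (x₁ : ℂ) (xr : Fin (N - 1) → ℂ) (k : Fin N) : ℂ :=
  if h : (k : ℕ) = 0 then x₁ else xr ⟨(k : ℕ) - 1, by omega⟩

/-- The map `(ŝ, x_{2:N}) ↦` first `N+Q−1` entries of
`(diag(x) Q_o diag(p) ŝ, diag(x) Q_e diag(p) ŝ)` (for fixed pilot `x₁`). -/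
noncomputable def phiMap (N M : ℕ) (hQ : 2 * M + 1 < N) (c : Fin (2 * M + 1) → ℝ)
    (x₁ : ℂ) (v : (Fin (2 * M + 1) → ℂ) × (Fin (N - 1) → ℂ))
    (i : Fin (N + (2 * M + 1) - 1)) : ℂ :=
  if h : (i : ℕ) < N then
    xvec N x₁ v.2 ⟨(i : ℕ), h⟩ *
      ∑ m, Qodd N M ⟨(i : ℕ), h⟩ m * pvec N M c m * v.1 m
  else
    xvec N x₁ v.2 ⟨(i : ℕ) - N, by omega⟩ *
      ∑ m, Qeven N M ⟨(i : ℕ) - N, by omega⟩ m * pvec N M c m * v.1 m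

/-- Standard basis of the domain `ℂ^Q × ℂ^{N−1}`. -/
noncomputable def basisVec (N M : ℕ) (hQ : 2 * M + 1 < N)
    (j : Fin (N + (2 * M + 1) - 1)) :
    (Fin (2 * M + 1) → ℂ) × (Fin (N - 1) → ℂ) :=
  if h : (j : ℕ) < 2 * M + 1 then (Pi.single ⟨(j : ℕ), h⟩ 1, 0)
  else (0, Pi.single ⟨(j : ℕ) - (2 * M + 1), by omega⟩ 1)

/-- Jacobian matrix of `phiMap` (eq. (61) of the paper): entry `(i,j)` is the
derivative of the `i`-th component in the direction of the `j`-th coordinate. -/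
noncomputable def jacPhi (N M : ℕ) (hQ : 2 * M + 1 < N) (c : Fin (2 * M + 1) → ℝ)
    (x₁ : ℂ) (v : (Fin (2 * M + 1) → ℂ) × (Fin (N - 1) → ℂ)) :
    Matrix (Fin (N + (2 * M + 1) - 1)) (Fin (N + (2 * M + 1) - 1)) ℂ :=
  Matrix.of fun i j => fderiv ℂ (phiMap N M hQ c x₁) v (basisVec N M hQ j) i

set_option linter.unusedSectionVars false
set_option maxHeartbeats 1000000


noncomputable def erow (N M : ℕ) (t : ℕ) (m : Fin (2*M+1)) : ℂ :=
  Complex.exp (I * Real.pi * (((m:ℕ):ℂ) - (M:ℂ)) * (t:ℂ) / (N:ℂ))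

lemma erow_eq (N M t : ℕ) (m : Fin (2*M+1)) :
    erow N M t m = Complex.exp (-(I * Real.pi * (M:ℂ) * t / N)) *
      Complex.exp (I * Real.pi * t / N) ^ (m:ℕ) := by
  rw [← Complex.exp_nat_mul, ← Complex.exp_add, erow]
  congr 1
  ring

lemma node_inj (N : ℕ) (hN : 0 < N) {t t' : ℕ} (ht : t < 2*N) (ht' : t' < 2*N)
    (h : Complex.exp (I*Real.pi*(t:ℂ)/N) = Complex.exp (I*Real.pi*(t':ℂ)/N)) : t = t' := by
  rw [Complex.exp_eq_exp_iff_exists_int] at h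
  obtain ⟨n, hn⟩ := h
  have hNne : (N:ℂ) ≠ 0 := by exact_mod_cast hN.ne'
  have hπ : (Real.pi:ℂ) ≠ 0 := by exact_mod_cast Real.pi_ne_zero
  have h0 : (Complex.I * Real.pi) ≠ 0 := mul_ne_zero I_ne_zero hπ
  have h2 : (t:ℂ) = t' + n*(2*N) :=
    mul_left_cancel₀ h0 (by field_simp at hn; linear_combination (I * (Real.pi:ℂ)) * hn)
  have h3 : (t:ℤ) = t' + n*(2*N) := by exact_mod_cast h2
  have hN' : (0:ℤ) < N := by exact_mod_cast hN
  have h1 : (t:ℤ) < 2*N := by exact_mod_cast ht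
  have h1' : (t':ℤ) < 2*N := by exact_mod_cast ht'
  have ht0 : (0:ℤ) ≤ (t:ℤ) := Int.natCast_nonneg t
  have ht0' : (0:ℤ) ≤ (t':ℤ) := Int.natCast_nonneg t'
  have hn0 : n = 0 := by
    rcases lt_trichotomy n 0 with h|h|h
    · have hle : n ≤ -1 := by omega
      have : n*(2*N) ≤ -1*(2*N) := by
        apply mul_le_mul_of_nonneg_right hle; positivity
      omega
    · exact h
    · have hle : 1 ≤ n := h
      have : 1*(2*N) ≤ n*(2*N) := by
        apply mul_le_mul_of_nonneg_right hle; positivity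
      omega
  rw [hn0] at h3
  omega

/-- the matrix with rows `erow (t r)` is invertible when the `t r < 2N` are distinct. -/
lemma det_erow_ne_zero (N M : ℕ) (hN : 0 < N) (t : Fin (2*M+1) → ℕ)
    (htinj : Function.Injective t) (hlt : ∀ r, t r < 2*N) :
    (Matrix.of fun r m => erow N M (t r) m).det ≠ 0 := by
  have hz : Function.Injective (fun r => Complex.exp (I*Real.pi*(t r : ℂ)/N)) := by
    intro r r' h
    exact htinj (node_inj N hN (hlt r) (hlt r') h)
  have heq : (Matrix.of fun r m => erow N M (t r) m) =
      (Matrix.of fun r m => Complex.exp (-(I * Real.pi * (M:ℂ) * (t r) / N)) *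
        (Matrix.vandermonde (fun r => Complex.exp (I*Real.pi*(t r : ℂ)/N))) r m) := by
    ext r m
    simp [Matrix.vandermonde, erow_eq]
  rw [heq]
  rw [Matrix.det_mul_column]
  apply mul_ne_zero
  · exact Finset.prod_ne_zero_iff.2 fun r _ => Complex.exp_ne_zero _
  · rw [Matrix.det_vandermonde]
    apply Finset.prod_ne_zero_iff.2
    intro i _
    apply Finset.prod_ne_zero_iff.2
    intro j hj
    rw [Finset.mem_Ioi] at hj
    exact sub_ne_zero.2 fun h => absurd (hz h) hj.ne'
lemma sinc_ne_zero {t : ℝ} (h : |t| < 1) : sinc t ≠ 0 := by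
  unfold sinc
  split_ifs with h0
  · norm_num
  · apply div_ne_zero
    · rw [Ne, Real.sin_eq_zero_iff_of_lt_of_lt]
      · exact fun hh => h0 (by
          have := Real.pi_ne_zero
          simpa [Real.pi_ne_zero] using hh)
      · nlinarith [abs_lt.1 h, Real.pi_pos]
      · nlinarith [abs_lt.1 h, Real.pi_pos]
    · exact mul_ne_zero Real.pi_ne_zero h0

lemma pvec_ne_zero (N M : ℕ) (hQ : 2 * M + 1 < N) (c : Fin (2 * M + 1) → ℝ)
    (hc : ∀ m, 0 < c m) (m : Fin (2 * M + 1)) : pvec N M c m ≠ 0 := by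
  have hN : 0 < N := by omega
  unfold pvec
  apply mul_ne_zero
  apply mul_ne_zero
  apply mul_ne_zero
  · simp [Real.sqrt_eq_zero']
  · exact Complex.exp_ne_zero _
  · rw [Ne, Complex.ofReal_eq_zero]
    apply sinc_ne_zero
    have hNpos : (0:ℝ) < 2*N := by positivity
    rw [abs_div, div_lt_one (by rw [abs_of_pos hNpos]; exact hNpos)]
    have hm2 : ((m:ℕ):ℝ) ≤ 2*M := by exact_mod_cast (by omega : (m:ℕ) ≤ 2*M)
    have hm0 : (0:ℝ) ≤ ((m:ℕ):ℝ) := Nat.cast_nonneg _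
    have h1 : |(((m:ℕ):ℝ) - M)| ≤ M := abs_le.2 ⟨by linarith, by linarith⟩
    have h3 : (M:ℝ) < |2*(N:ℝ)| := by
      rw [abs_of_pos hNpos]
      exact_mod_cast (by omega : M < 2*N)
    linarith
  · exact_mod_cast (hc m).ne'
section CLM
variable {Q R : Type*} [Fintype Q] [DecidableEq Q] [Fintype R] [DecidableEq R]

noncomputable def sumCLM (a : Q → ℂ) : ((Q → ℂ) × (R → ℂ)) →L[ℂ] ℂ :=
  ∑ m, a m • ((ContinuousLinearMap.proj m).comp
    (ContinuousLinearMap.fst ℂ (Q → ℂ) (R → ℂ)))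

lemma sumCLM_apply (a : Q → ℂ) (w : (Q → ℂ) × (R → ℂ)) :
    sumCLM a w = ∑ m, a m * w.1 m := by
  simp [sumCLM]

noncomputable def sndCLM (j : R) : ((Q → ℂ) × (R → ℂ)) →L[ℂ] ℂ :=
  (ContinuousLinearMap.proj j).comp (ContinuousLinearMap.snd ℂ (Q → ℂ) (R → ℂ))

lemma sndCLM_apply (j : R) (w : (Q → ℂ) × (R → ℂ)) : sndCLM j w = w.2 j := rfl

lemma hasFDerivAt_sumc (a : Q → ℂ) (v : (Q → ℂ) × (R → ℂ)) :
    HasFDerivAt (fun v : (Q→ℂ)×(R→ℂ) => ∑ m, a m * v.1 m) (sumCLM a) v := by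
  unfold sumCLM
  apply HasFDerivAt.fun_sum
  intro m _
  exact (((ContinuousLinearMap.proj m).comp
    (ContinuousLinearMap.fst ℂ (Q → ℂ) (R → ℂ))).hasFDerivAt (x := v)).const_mul (a m)

lemma hasFDerivAt_snd_mul_sum (a : Q → ℂ) (j : R) (v : (Q → ℂ) × (R → ℂ)) :
    HasFDerivAt (fun v : (Q→ℂ)×(R→ℂ) => v.2 j * ∑ m, a m * v.1 m)
      (v.2 j • sumCLM a + (∑ m, a m * v.1 m) • sndCLM j) v :=
  ((sndCLM j (R := R)).hasFDerivAt).mul (hasFDerivAt_sumc a v)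

lemma hasFDerivAt_const_mul_sum (x₁ : ℂ) (a : Q → ℂ) (v : (Q → ℂ) × (R → ℂ)) :
    HasFDerivAt (fun v : (Q→ℂ)×(R→ℂ) => x₁ * ∑ m, a m * v.1 m)
      (x₁ • sumCLM a) v := by
  exact (hasFDerivAt_sumc a v).const_mul x₁

end CLM

section Jac
variable (N M : ℕ) (hQ : 2 * M + 1 < N) (c : Fin (2 * M + 1) → ℝ) (x₁ : ℂ)

abbrev EE (N M : ℕ) := (Fin (2 * M + 1) → ℂ) × (Fin (N - 1) → ℂ)

lemma hasFDerivAt_xvec_mul_sum (hN : 1 < N) (k : Fin N) (a : Fin (2*M+1) → ℂ) (v : EE N M) :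
    HasFDerivAt (fun v : EE N M => xvec N x₁ v.2 k * ∑ m, a m * v.1 m)
      (if h : (k:ℕ) = 0 then x₁ • sumCLM a
       else xvec N x₁ v.2 k • sumCLM a +
         (∑ m, a m * v.1 m) • sndCLM ⟨(k:ℕ)-1, by omega⟩) v := by
  by_cases h : (k:ℕ) = 0
  · rw [dif_pos h]
    have he : (fun v : EE N M => xvec N x₁ v.2 k * ∑ m, a m * v.1 m)
        = fun v : EE N M => x₁ * ∑ m, a m * v.1 m := by
      funext w; rw [xvec, dif_pos h]
    rw [he]
    exact hasFDerivAt_const_mul_sum x₁ a v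
  · rw [dif_neg h]
    have he : (fun v : EE N M => xvec N x₁ v.2 k * ∑ m, a m * v.1 m)
        = fun v : EE N M => v.2 ⟨(k:ℕ)-1, by omega⟩ * ∑ m, a m * v.1 m := by
      funext w; rw [xvec, dif_neg h]
    have he2 : xvec N x₁ v.2 k = v.2 ⟨(k:ℕ)-1, by omega⟩ := by rw [xvec, dif_neg h]
    rw [he, he2]
    exact hasFDerivAt_snd_mul_sum a _ v

lemma phi_comp_eq_lt (i : Fin (N + (2*M+1) - 1)) (hi : (i:ℕ) < N) :
    (fun v : EE N M => phiMap N M hQ c x₁ v i)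
      = fun v : EE N M => xvec N x₁ v.2 ⟨(i:ℕ), hi⟩ *
          ∑ m, (Qodd N M ⟨(i:ℕ), hi⟩ m * pvec N M c m) * v.1 m := by
  funext v; rw [phiMap, dif_pos hi]

lemma phi_comp_eq_ge (i : Fin (N + (2*M+1) - 1)) (hi : ¬ (i:ℕ) < N) :
    (fun v : EE N M => phiMap N M hQ c x₁ v i)
      = fun v : EE N M => xvec N x₁ v.2 ⟨(i:ℕ) - N, by omega⟩ *
          ∑ m, (Qeven N M ⟨(i:ℕ) - N, by omega⟩ m * pvec N M c m) * v.1 m := by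
  funext v; rw [phiMap, dif_neg hi]

lemma phi_comp_diff (v : EE N M) (i : Fin (N + (2*M+1) - 1)) :
    DifferentiableAt ℂ (fun v : EE N M => phiMap N M hQ c x₁ v i) v := by
  have hN : 1 < N := by omega
  by_cases hi : (i:ℕ) < N
  · rw [phi_comp_eq_lt N M hQ c x₁ i hi]
    exact (hasFDerivAt_xvec_mul_sum N M x₁ hN _ _ v).differentiableAt
  · rw [phi_comp_eq_ge N M hQ c x₁ i hi]
    exact (hasFDerivAt_xvec_mul_sum N M x₁ hN _ _ v).differentiableAt

noncomputable def Ao (s : Fin (2*M+1) → ℂ) (i : Fin N) : ℂ :=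
  ∑ m, Qodd N M i m * pvec N M c m * s m

noncomputable def Be (s : Fin (2*M+1) → ℂ) (k : Fin N) : ℂ :=
  ∑ m, Qeven N M k m * pvec N M c m * s m


lemma basisVec_fst_lt (j : Fin (N + (2*M+1) - 1)) (hj : (j:ℕ) < 2*M+1) :
    (basisVec N M hQ j).1 = Pi.single ⟨(j:ℕ), hj⟩ 1 := by
  rw [basisVec, dif_pos hj]

lemma basisVec_snd_lt (j : Fin (N + (2*M+1) - 1)) (hj : (j:ℕ) < 2*M+1) :
    (basisVec N M hQ j).2 = 0 := by
  rw [basisVec, dif_pos hj]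

lemma basisVec_fst_ge (j : Fin (N + (2*M+1) - 1)) (hj : ¬ (j:ℕ) < 2*M+1) :
    (basisVec N M hQ j).1 = 0 := by
  rw [basisVec, dif_neg hj]

lemma basisVec_snd_ge (j : Fin (N + (2*M+1) - 1)) (hj : ¬ (j:ℕ) < 2*M+1) :
    (basisVec N M hQ j).2 = Pi.single ⟨(j:ℕ) - (2*M+1), by omega⟩ 1 := by
  rw [basisVec, dif_neg hj]

lemma sumCLM_basis_lt (a : Fin (2*M+1) → ℂ) (j : Fin (N + (2*M+1) - 1))
    (hj : (j:ℕ) < 2*M+1) :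
    sumCLM (R := Fin (N-1)) a (basisVec N M hQ j) = a ⟨(j:ℕ), hj⟩ := by
  rw [sumCLM_apply, basisVec_fst_lt N M hQ j hj]
  simp [Pi.single_apply, mul_ite]

lemma sumCLM_basis_ge (a : Fin (2*M+1) → ℂ) (j : Fin (N + (2*M+1) - 1))
    (hj : ¬ (j:ℕ) < 2*M+1) :
    sumCLM (R := Fin (N-1)) a (basisVec N M hQ j) = 0 := by
  rw [sumCLM_apply, basisVec_fst_ge N M hQ j hj]
  simp

lemma sndCLM_basis_lt (k : Fin (N-1)) (j : Fin (N + (2*M+1) - 1))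
    (hj : (j:ℕ) < 2*M+1) :
    sndCLM (Q := Fin (2*M+1)) k (basisVec N M hQ j) = 0 := by
  rw [sndCLM_apply, basisVec_snd_lt N M hQ j hj]
  rfl

lemma sndCLM_basis_ge (k : Fin (N-1)) (j : Fin (N + (2*M+1) - 1))
    (hj : ¬ (j:ℕ) < 2*M+1) :
    sndCLM (Q := Fin (2*M+1)) k (basisVec N M hQ j)
      = if (k:ℕ) = (j:ℕ) - (2*M+1) then 1 else 0 := by
  rw [sndCLM_apply, basisVec_snd_ge N M hQ j hj, Pi.single_apply]
  simp [Fin.ext_iff]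

lemma jacPhi_apply (s : Fin (2*M+1) → ℂ) (xr : Fin (N-1) → ℂ)
    (i j : Fin (N + (2*M+1) - 1)) :
    jacPhi N M hQ c x₁ (s, xr) i j =
    if hi : (i:ℕ) < N then
      (if hj : (j:ℕ) < 2*M+1 then
        xvec N x₁ xr ⟨(i:ℕ), hi⟩ * (Qodd N M ⟨(i:ℕ),hi⟩ ⟨(j:ℕ),hj⟩ * pvec N M c ⟨(j:ℕ),hj⟩)
      else if (i:ℕ) = (j:ℕ) - (2*M+1) + 1 then Ao N M c s ⟨(i:ℕ),hi⟩ else 0)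
    else
      (if hj : (j:ℕ) < 2*M+1 then
        xvec N x₁ xr ⟨(i:ℕ) - N, by omega⟩ *
          (Qeven N M ⟨(i:ℕ)-N, by omega⟩ ⟨(j:ℕ),hj⟩ * pvec N M c ⟨(j:ℕ),hj⟩)
      else if (i:ℕ) - N = (j:ℕ) - (2*M+1) + 1 then Be N M c s ⟨(i:ℕ)-N, by omega⟩ else 0) := by
  have hN : 1 < N := by omega
  have hstep : jacPhi N M hQ c x₁ (s, xr) i j
      = fderiv ℂ (fun v : EE N M => phiMap N M hQ c x₁ v i) (s, xr) (basisVec N M hQ j) := by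
    show fderiv ℂ (phiMap N M hQ c x₁) (s, xr) (basisVec N M hQ j) i = _
    rw [fderiv_pi (phi_comp_diff N M hQ c x₁ (s, xr))]
    rfl
  rw [hstep]
  by_cases hi : (i:ℕ) < N
  · rw [phi_comp_eq_lt N M hQ c x₁ i hi, dif_pos hi,
      (hasFDerivAt_xvec_mul_sum N M x₁ hN ⟨(i:ℕ),hi⟩ _ (s,xr)).fderiv]
    by_cases h0 : (i:ℕ) = 0
    · rw [dif_pos h0]
      by_cases hj : (j:ℕ) < 2*M+1
      · rw [dif_pos hj]
        rw [ContinuousLinearMap.smul_apply, sumCLM_basis_lt N M hQ _ j hj]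
        simp [xvec, h0, smul_eq_mul]
      · rw [dif_neg hj, if_neg (by omega)]
        rw [ContinuousLinearMap.smul_apply, sumCLM_basis_ge N M hQ _ j hj]
        simp
    · rw [dif_neg h0]
      by_cases hj : (j:ℕ) < 2*M+1
      · rw [dif_pos hj]
        rw [ContinuousLinearMap.add_apply, ContinuousLinearMap.smul_apply,
          ContinuousLinearMap.smul_apply, sumCLM_basis_lt N M hQ _ j hj,
          sndCLM_basis_lt N M hQ _ j hj]
        simp [smul_eq_mul]
      · rw [dif_neg hj]
        rw [ContinuousLinearMap.add_apply, ContinuousLinearMap.smul_apply,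
          ContinuousLinearMap.smul_apply, sumCLM_basis_ge N M hQ _ j hj,
          sndCLM_basis_ge N M hQ _ j hj]
        have harith : ((i:ℕ) - 1 = (j:ℕ) - (2*M+1)) ↔ ((i:ℕ) = (j:ℕ) - (2*M+1) + 1) := by
          omega
        by_cases hc2 : (i:ℕ) = (j:ℕ) - (2*M+1) + 1
        · rw [if_pos (harith.2 hc2), if_pos hc2]
          simp [Ao]
        · rw [if_neg (fun hh => hc2 (harith.1 hh)), if_neg hc2]
          simp
  · rw [phi_comp_eq_ge N M hQ c x₁ i hi, dif_neg hi,
      (hasFDerivAt_xvec_mul_sum N M x₁ hN ⟨(i:ℕ)-N, by omega⟩ _ (s,xr)).fderiv]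
    by_cases h0 : (i:ℕ) - N = 0
    · rw [dif_pos h0]
      by_cases hj : (j:ℕ) < 2*M+1
      · rw [dif_pos hj]
        rw [ContinuousLinearMap.smul_apply, sumCLM_basis_lt N M hQ _ j hj]
        simp [xvec, h0, smul_eq_mul]
      · rw [dif_neg hj, if_neg (by omega)]
        rw [ContinuousLinearMap.smul_apply, sumCLM_basis_ge N M hQ _ j hj]
        simp
    · rw [dif_neg h0]
      by_cases hj : (j:ℕ) < 2*M+1
      · rw [dif_pos hj]
        simp only [ContinuousLinearMap.add_apply, ContinuousLinearMap.smul_apply,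
          sumCLM_basis_lt N M hQ _ j hj, sndCLM_basis_lt N M hQ _ j hj]
        simp [smul_eq_mul]
      · rw [dif_neg hj]
        simp only [ContinuousLinearMap.add_apply, ContinuousLinearMap.smul_apply,
          sumCLM_basis_ge N M hQ _ j hj, sndCLM_basis_ge N M hQ _ j hj]
        have harith : ((i:ℕ) - N - 1 = (j:ℕ) - (2*M+1)) ↔ ((i:ℕ) - N = (j:ℕ) - (2*M+1) + 1) := by
          omega
        by_cases hc2 : (i:ℕ) - N = (j:ℕ) - (2*M+1) + 1
        · rw [if_pos (harith.2 hc2), if_pos hc2]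
          simp [Be]
        · rw [if_neg (fun hh => hc2 (harith.1 hh)), if_neg hc2]
          simp

end Jac
def tW (i r : ℕ) : ℕ := if r = 0 then 2*i+1 else 2*r

noncomputable def Wmat (N M i : ℕ) : Matrix (Fin (2*M+1)) (Fin (2*M+1)) ℂ :=
  Matrix.of fun r m => erow N M (tW i (r:ℕ)) m


lemma det_Wmat_ne_zero (N M : ℕ) (hQ : 2*M+1 < N) (i : ℕ) (hi : i < N) :
    (Wmat N M i).det ≠ 0 := by
  apply det_erow_ne_zero N M (by omega)
  · intro r r' h
    have hr := r.isLt; have hr' := r'.isLt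
    apply Fin.ext
    have h' : (if (r:ℕ)=0 then 2*i+1 else 2*(r:ℕ)) = (if (r':ℕ)=0 then 2*i+1 else 2*(r':ℕ)) := h
    split_ifs at h' <;> omega
  · intro r
    have hr := r.isLt
    unfold tW
    split_ifs <;> omega

noncomputable def uu (N M : ℕ) : Fin (2*M+1) → ℂ := (Wmat N M 0)⁻¹ *ᵥ Pi.single 0 1

lemma Wmat_mulVec_uu (N M : ℕ) (hQ : 2*M+1 < N) :
    Wmat N M 0 *ᵥ uu N M = Pi.single 0 1 := by
  rw [uu, Matrix.mulVec_mulVec,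
    Matrix.mul_nonsing_inv _ (isUnit_iff_ne_zero.2 (det_Wmat_ne_zero N M hQ 0 (by omega))),
    Matrix.one_mulVec]

lemma uu_ne_zero (N M : ℕ) (hQ : 2*M+1 < N) : uu N M ≠ 0 := by
  intro h
  have h2 := Wmat_mulVec_uu N M hQ
  rw [h, Matrix.mulVec_zero] at h2
  have := congrFun h2 0
  rw [Pi.single_eq_same] at this
  exact zero_ne_one this

lemma Wmat_mulVec_apply (N M i : ℕ) (r : Fin (2*M+1)) :
    (Wmat N M i *ᵥ uu N M) r = ∑ m, erow N M (tW i (r:ℕ)) m * uu N M m := by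
  simp [Wmat, Matrix.mulVec, dotProduct]

lemma sum_erow_uu_odd_ne (N M : ℕ) (hQ : 2*M+1 < N) (i : Fin N) :
    ∑ m, erow N M (2*(i:ℕ)+1) m * uu N M m ≠ 0 := by
  intro h0
  have hmv : Wmat N M (i:ℕ) *ᵥ uu N M = 0 := by
    funext r
    rw [Wmat_mulVec_apply]
    by_cases hr : (r:ℕ) = 0
    · rw [show tW (i:ℕ) (r:ℕ) = 2*(i:ℕ)+1 by unfold tW; rw [if_pos hr]]
      exact h0
    · have : tW (i:ℕ) (r:ℕ) = tW 0 (r:ℕ) := by unfold tW; rw [if_neg hr, if_neg hr]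
      rw [this, ← Wmat_mulVec_apply, Wmat_mulVec_uu N M hQ, Pi.single_apply,
        if_neg (fun hh => hr (by simp [hh]))]
      rfl
  exact det_Wmat_ne_zero N M hQ (i:ℕ) i.isLt
    (Matrix.exists_mulVec_eq_zero_iff.1 ⟨uu N M, uu_ne_zero N M hQ, hmv⟩)

lemma sum_erow_uu_even_zero (N M : ℕ) (hQ : 2*M+1 < N) (k : ℕ) (hk : k < 2*M) :
    ∑ m, erow N M (2*k+2) m * uu N M m = 0 := by
  have hr : (k+1) < 2*M+1 := by omega
  have : (2*k+2) = tW 0 ((⟨k+1, hr⟩ : Fin (2*M+1)):ℕ) := by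
    show 2*k+2 = tW 0 (k+1); unfold tW; rw [if_neg (by omega)]; omega
  rw [this, ← Wmat_mulVec_apply, Wmat_mulVec_uu N M hQ, Pi.single_apply,
    if_neg (by intro hh; have := congrArg Fin.val hh; simp at this)]

lemma Qodd_eq_erow (N M : ℕ) (k : Fin N) (m : Fin (2*M+1)) :
    Qodd N M k m = erow N M (2*(k:ℕ)+1) m := by
  simp only [Qodd, erow, Matrix.of_apply]
  congr 1
  push_cast
  ring

lemma Qeven_eq_erow (N M : ℕ) (k : Fin N) (m : Fin (2*M+1)) :
    Qeven N M k m = erow N M (2*(k:ℕ)+2) m := by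
  simp only [Qeven, erow, Matrix.of_apply]
  congr 1
  push_cast
  ring

lemma xvec_ones (N : ℕ) (x₁ : ℂ) (k : Fin N) :
    xvec N x₁ (fun _ => 1) k = if (k:ℕ) = 0 then x₁ else 1 := by
  rw [xvec]; split_ifs <;> rfl

lemma Ao_ne_zero (N M : ℕ) (hQ : 2*M+1 < N) (c : Fin (2*M+1) → ℝ)
    (hc : ∀ m, 0 < c m) (i : Fin N) :
    Ao N M c (fun m => uu N M m / pvec N M c m) i ≠ 0 := by
  have he : Ao N M c (fun m => uu N M m / pvec N M c m) i
      = ∑ m, erow N M (2*(i:ℕ)+1) m * uu N M m := by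
    apply Finset.sum_congr rfl
    intro m _
    rw [Qodd_eq_erow]
    field_simp [pvec_ne_zero N M hQ c hc m]
  rw [he]
  exact sum_erow_uu_odd_ne N M hQ i

lemma Be_zero (N M : ℕ) (hQ : 2*M+1 < N) (c : Fin (2*M+1) → ℝ)
    (hc : ∀ m, 0 < c m) (k : Fin N) (hk : (k:ℕ) < 2*M) :
    Be N M c (fun m => uu N M m / pvec N M c m) k = 0 := by
  have he : Be N M c (fun m => uu N M m / pvec N M c m) k
      = ∑ m, erow N M (2*(k:ℕ)+2) m * uu N M m := by
    apply Finset.sum_congr rfl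
    intro m _
    rw [Qeven_eq_erow]
    field_simp [pvec_ne_zero N M hQ c hc m]
  rw [he]
  exact sum_erow_uu_even_zero N M hQ (k:ℕ) hk

def emap (N M : ℕ) (hQ : 2*M+1 < N) (r : Fin (2*M+1)) : Fin (N+(2*M+1)-1) :=
  if (r:ℕ) = 0 then ⟨0, by omega⟩ else ⟨N + (r:ℕ) - 1, by
    have := r.isLt; omega⟩

lemma emap_val (N M : ℕ) (hQ : 2*M+1 < N) (r : Fin (2*M+1)) :
    ((emap N M hQ r : Fin (N+(2*M+1)-1)) : ℕ)
      = if (r:ℕ) = 0 then 0 else N + (r:ℕ) - 1 := by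
  rw [emap]; split_ifs <;> rfl

lemma emap_inj (N M : ℕ) (hQ : 2*M+1 < N) : Function.Injective (emap N M hQ) := by
  intro a b h
  have hv := congrArg Fin.val h
  rw [emap_val, emap_val] at hv
  have ha := a.isLt; have hb := b.isLt
  apply Fin.ext
  split_ifs at hv <;> omega

lemma mem_emap_of (N M : ℕ) (hQ : 2*M+1 < N) (i : Fin (N+(2*M+1)-1))
    (h : (i:ℕ) = 0 ∨ N ≤ (i:ℕ)) : ∃ r, emap N M hQ r = i := by
  rcases h with h | h
  · refine ⟨0, Fin.ext ?_⟩
    rw [emap_val, if_pos (by simp : ((0:Fin (2*M+1)):ℕ) = 0)]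
    omega
  · have hilt := i.isLt
    refine ⟨⟨(i:ℕ)-N+1, by omega⟩, Fin.ext ?_⟩
    have hv : ((⟨(i:ℕ)-N+1, by omega⟩ : Fin (2*M+1)):ℕ) = (i:ℕ)-N+1 := rfl
    rw [emap_val, hv, if_neg (by omega)]
    omega

lemma jacPhi_entry_row0 (N M : ℕ) (hQ : 2*M+1 < N) (c : Fin (2*M+1) → ℝ) (x₁ : ℂ)
    (s : Fin (2*M+1) → ℂ) (xr : Fin (N-1) → ℂ)
    (jb : Fin (N+(2*M+1)-1)) (hjb : (jb:ℕ) < 2*M+1) :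
    jacPhi N M hQ c x₁ (s, xr) ⟨0, by omega⟩ jb
      = x₁ * (erow N M 1 ⟨(jb:ℕ), hjb⟩ * pvec N M c ⟨(jb:ℕ), hjb⟩) := by
  rw [jacPhi_apply, dif_pos ((by omega : (0:ℕ) < N) :
      ((⟨0, by omega⟩ : Fin (N+(2*M+1)-1)):ℕ) < N), dif_pos hjb, Qodd_eq_erow,
    xvec, dif_pos rfl]
  rfl

lemma jacPhi_entry_rowN (N M : ℕ) (hQ : 2*M+1 < N) (c : Fin (2*M+1) → ℝ) (x₁ : ℂ)
    (s : Fin (2*M+1) → ℂ) (xr : Fin (N-1) → ℂ) (r : Fin (2*M+1)) (hr : (r:ℕ) ≠ 0)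
    (jb : Fin (N+(2*M+1)-1)) (hjb : (jb:ℕ) < 2*M+1) :
    jacPhi N M hQ c x₁ (s, xr)
        ⟨N + (r:ℕ) - 1, by have := r.isLt; omega⟩ jb
      = xvec N x₁ xr ⟨(r:ℕ)-1, by have := r.isLt; omega⟩ *
          (erow N M (2*(r:ℕ)) ⟨(jb:ℕ), hjb⟩ * pvec N M c ⟨(jb:ℕ), hjb⟩) := by
  have hrlt := r.isLt
  rw [jacPhi_apply, dif_neg ((by omega : ¬(N + (r:ℕ) - 1 < N)) :
      ¬ (((⟨N + (r:ℕ) - 1, by omega⟩ : Fin (N+(2*M+1)-1)):ℕ) < N)), dif_pos hjb,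
    Qeven_eq_erow]
  have hfin : (⟨((⟨N + (r:ℕ) - 1, by omega⟩ : Fin (N+(2*M+1)-1)):ℕ) - N,
        by exact (by omega : N + (r:ℕ) - 1 - N < N)⟩ : Fin N)
      = ⟨(r:ℕ)-1, by omega⟩ := Fin.ext (by show N + (r:ℕ) - 1 - N = (r:ℕ)-1; omega)
  rw [hfin]
  have ht : 2*(((⟨(r:ℕ)-1, by omega⟩ : Fin N)):ℕ)+2 = 2*(r:ℕ) := by
    show 2*((r:ℕ)-1)+2 = 2*(r:ℕ); omega
  rw [ht]

lemma Wmat_entry0 (N M : ℕ) (r : Fin (2*M+1)) (hr : (r:ℕ) = 0) (j' : Fin (2*M+1)) :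
    Wmat N M 0 r j' = erow N M 1 j' := by
  rw [Wmat]
  simp only [Matrix.of_apply]
  unfold tW
  rw [if_pos hr]

lemma Wmat_entryN (N M : ℕ) (r : Fin (2*M+1)) (hr : (r:ℕ) ≠ 0) (j' : Fin (2*M+1)) :
    Wmat N M 0 r j' = erow N M (2*(r:ℕ)) j' := by
  rw [Wmat]
  simp only [Matrix.of_apply]
  unfold tW
  rw [if_neg hr]

noncomputable def vnu (N M : ℕ) (hQ : 2*M+1 < N) (x₁ : ℂ)
    (v : Fin (N+(2*M+1)-1) → ℂ) (r : Fin (2*M+1)) : ℂ :=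
  if (r:ℕ) = 0 then x₁ * v ⟨0, by omega⟩
  else (if (r:ℕ) = 1 then x₁ else 1) * v ⟨N + (r:ℕ) - 1, by have := r.isLt; omega⟩

lemma term_eq (N M : ℕ) (hQ : 2*M+1 < N) (c : Fin (2*M+1) → ℝ) (x₁ : ℂ)
    (s : Fin (2*M+1) → ℂ) (v : Fin (N+(2*M+1)-1) → ℂ) (r : Fin (2*M+1))
    (jb : Fin (N+(2*M+1)-1)) (hjblt : (jb:ℕ) < 2*M+1) :
    jacPhi N M hQ c x₁ (s, fun _ => 1) (emap N M hQ r) jb * v (emap N M hQ r)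
      = vnu N M hQ x₁ v r * Wmat N M 0 r ⟨(jb:ℕ), hjblt⟩ * pvec N M c ⟨(jb:ℕ), hjblt⟩ := by
  by_cases hr : (r:ℕ) = 0
  · have her : emap N M hQ r = ⟨0, by omega⟩ := by
      apply Fin.ext; rw [emap_val, if_pos hr]
    rw [her, jacPhi_entry_row0 N M hQ c x₁ s _ jb hjblt, Wmat_entry0 N M r hr, vnu,
      if_pos hr]
    ring
  · have hrlt := r.isLt
    have her : emap N M hQ r = ⟨N + (r:ℕ) - 1, by omega⟩ := by
      apply Fin.ext; rw [emap_val, if_neg hr]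
    rw [her, jacPhi_entry_rowN N M hQ c x₁ s _ r hr jb hjblt, Wmat_entryN N M r hr, vnu,
      if_neg hr, xvec_ones]
    have hc1 : (((⟨(r:ℕ)-1, by have := r.isLt; omega⟩ : Fin N)):ℕ) = (r:ℕ) - 1 := rfl
    rw [hc1]
    by_cases hr1 : (r:ℕ) = 1
    · rw [if_pos (by omega : (r:ℕ) - 1 = 0), if_pos hr1]
      ring
    · rw [if_neg (by omega : ¬((r:ℕ) - 1 = 0)), if_neg hr1]
      ring

lemma jac_det_ne_zero' (N M : ℕ) (hQ : 2*M+1 < N) (c : Fin (2*M+1) → ℝ)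
    (hc : ∀ m, 0 < c m) (x₁ : ℂ) (hx₁ : x₁ ≠ 0) (s : Fin (2*M+1) → ℂ)
    (hAo : ∀ (i : Fin N), Ao N M c s i ≠ 0)
    (hBe : ∀ (k : Fin N), (k:ℕ) < 2*M → Be N M c s k = 0) :
    (jacPhi N M hQ c x₁ (s, fun _ => 1)).det ≠ 0 := by
  intro hdet
  have hdet' : (jacPhi N M hQ c x₁ (s, fun _ => 1)).transpose.det = 0 := by
    rw [Matrix.det_transpose]; exact hdet
  obtain ⟨v, hvne, hv⟩ := Matrix.exists_mulVec_eq_zero_iff.2 hdet'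
  have hv' : ∀ j, ∑ i, jacPhi N M hQ c x₁ (s, fun _ => 1) i j * v i = 0 := by
    intro j
    have h := congrFun hv j
    simpa [Matrix.mulVec, dotProduct, Matrix.transpose_apply] using h
  -- Step (a): v vanishes on indices 1..N-1
  have hva : ∀ i0 : Fin (N+(2*M+1)-1), 1 ≤ (i0:ℕ) → (i0:ℕ) ≤ N-1 → v i0 = 0 := by
    intro i0 h1 h2
    have hiN : (i0:ℕ) < N := by omega
    set j : Fin (N+(2*M+1)-1) := ⟨2*M+1 + (i0:ℕ) - 1, by omega⟩ with hjdef
    have hjval : (j:ℕ) = 2*M+1 + (i0:ℕ) - 1 := rfl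
    have hjge : ¬ ((j:ℕ) < 2*M+1) := by rw [hjval]; omega
    have hsum := hv' j
    rw [Fintype.sum_eq_single i0 ?_] at hsum
    · rw [jacPhi_apply, dif_pos hiN, dif_neg hjge,
        if_pos (show (i0:ℕ) = (j:ℕ) - (2*M+1) + 1 by rw [hjval]; omega)] at hsum
      rcases mul_eq_zero.1 hsum with h | h
      · exact absurd h (hAo _)
      · exact h
    · intro b hb
      have hbv : (b:ℕ) ≠ (i0:ℕ) := fun hh => hb (Fin.ext hh)
      have hblt := b.isLt
      rw [jacPhi_apply]
      by_cases hbN : (b:ℕ) < N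
      · rw [dif_pos hbN, dif_neg hjge,
          if_neg (show ¬((b:ℕ) = (j:ℕ) - (2*M+1) + 1) by rw [hjval]; omega), zero_mul]
      · rw [dif_neg hbN, dif_neg hjge]
        by_cases hc3 : (b:ℕ) - N = (j:ℕ) - (2*M+1) + 1
        · rw [if_pos hc3, hBe ⟨(b:ℕ)-N, by omega⟩ ((by omega : (b:ℕ) - N < 2*M) :
            ((⟨(b:ℕ)-N, by omega⟩ : Fin N) : ℕ) < 2*M), zero_mul]
        · rw [if_neg hc3, zero_mul]
  -- Step (b)
  have hsum2 : ∀ j' : Fin (2*M+1), ∑ r, vnu N M hQ x₁ v r * Wmat N M 0 r j' = 0 := by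
    intro j'
    have hjblt : (((⟨(j':ℕ), by have := j'.isLt; omega⟩ : Fin (N+(2*M+1)-1)):ℕ) < 2*M+1) :=
      j'.isLt
    have h0 := hv' ⟨(j':ℕ), by have := j'.isLt; omega⟩
    have h1 : ∑ i ∈ Finset.univ.image (emap N M hQ),
          jacPhi N M hQ c x₁ (s, fun _ => 1) i ⟨(j':ℕ), by have := j'.isLt; omega⟩ * v i
        = ∑ i, jacPhi N M hQ c x₁ (s, fun _ => 1) i ⟨(j':ℕ), by have := j'.isLt; omega⟩ * v i := by
      apply Finset.sum_subset (Finset.subset_univ _)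
      intro i _ hni
      have hilt := i.isLt
      have hi1 : 1 ≤ (i:ℕ) ∧ (i:ℕ) ≤ N-1 := by
        by_contra hcon
        rw [not_and_or] at hcon
        apply hni
        have hor : (i:ℕ) = 0 ∨ N ≤ (i:ℕ) := by omega
        obtain ⟨r, hr⟩ := mem_emap_of N M hQ i hor
        exact Finset.mem_image.2 ⟨r, Finset.mem_univ _, hr⟩
      rw [hva i hi1.1 hi1.2, mul_zero]
    have h2 : ∑ i ∈ Finset.univ.image (emap N M hQ),
          jacPhi N M hQ c x₁ (s, fun _ => 1) i ⟨(j':ℕ), by have := j'.isLt; omega⟩ * v i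
        = ∑ r, jacPhi N M hQ c x₁ (s, fun _ => 1) (emap N M hQ r)
            ⟨(j':ℕ), by have := j'.isLt; omega⟩ * v (emap N M hQ r) :=
      Finset.sum_image (fun a _ b _ hab => emap_inj N M hQ hab)
    have hjbfin : (⟨((⟨(j':ℕ), by have := j'.isLt; omega⟩ : Fin (N+(2*M+1)-1)):ℕ), hjblt⟩
        : Fin (2*M+1)) = j' := Fin.ext rfl
    have hfinal : ∑ r, vnu N M hQ x₁ v r * Wmat N M 0 r j' * pvec N M c j' = 0 := by
      calc ∑ r, vnu N M hQ x₁ v r * Wmat N M 0 r j' * pvec N M c j'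
          = ∑ r, jacPhi N M hQ c x₁ (s, fun _ => 1) (emap N M hQ r)
              ⟨(j':ℕ), by have := j'.isLt; omega⟩ * v (emap N M hQ r) := by
            refine Finset.sum_congr rfl (fun r _ => ?_)
            rw [term_eq N M hQ c x₁ s v r ⟨(j':ℕ), by have := j'.isLt; omega⟩ hjblt, hjbfin]
        _ = ∑ i ∈ Finset.univ.image (emap N M hQ),
              jacPhi N M hQ c x₁ (s, fun _ => 1) i ⟨(j':ℕ), by have := j'.isLt; omega⟩ * v i
              := h2.symm
        _ = ∑ i, jacPhi N M hQ c x₁ (s, fun _ => 1) i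
              ⟨(j':ℕ), by have := j'.isLt; omega⟩ * v i := h1
        _ = 0 := h0
    have hfac : (∑ r, vnu N M hQ x₁ v r * Wmat N M 0 r j') * pvec N M c j' = 0 := by
      rw [Finset.sum_mul]
      exact hfinal
    rcases mul_eq_zero.1 hfac with h | h
    · exact h
    · exact absurd h (pvec_ne_zero N M hQ c hc j')
  have hνzero : vnu N M hQ x₁ v = 0 := by
    by_contra hne
    have hmv : (Wmat N M 0).transpose *ᵥ (vnu N M hQ x₁ v) = 0 := by
      funext j'
      have h := hsum2 j'
      rw [Finset.sum_congr rfl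
        (fun r _ => mul_comm (vnu N M hQ x₁ v r) (Wmat N M 0 r j'))] at h
      simpa [Matrix.mulVec, dotProduct, Matrix.transpose_apply] using h
    have hdt := Matrix.exists_mulVec_eq_zero_iff.1 ⟨vnu N M hQ x₁ v, hne, hmv⟩
    rw [Matrix.det_transpose] at hdt
    exact det_Wmat_ne_zero N M hQ 0 (by omega) hdt
  apply hvne
  funext i
  have hilt := i.isLt
  by_cases hi0 : (i:ℕ) = 0
  · have h := congrFun hνzero 0
    rw [show (0 : Fin (2*M+1)) = ⟨0, by omega⟩ from rfl] at h
    rw [vnu] at h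
    simp only [if_pos rfl, Pi.zero_apply] at h
    rcases mul_eq_zero.1 h with h | h
    · exact absurd h hx₁
    · rw [show i = (⟨0, by omega⟩ : Fin (N+(2*M+1)-1)) from Fin.ext hi0]
      exact h
  · by_cases hiN : (i:ℕ) < N
    · exact hva i (by omega) (by omega)
    · have hrlt : (i:ℕ) - N + 1 < 2*M+1 := by omega
      have h := congrFun hνzero ⟨(i:ℕ)-N+1, hrlt⟩
      rw [vnu] at h
      have hvr : ((⟨(i:ℕ)-N+1, hrlt⟩ : Fin (2*M+1)):ℕ) = (i:ℕ)-N+1 := rfl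
      simp only [Pi.zero_apply, hvr] at h
      rw [if_neg (by omega)] at h
      rcases mul_eq_zero.1 h with h | h
      · by_cases h1 : (i:ℕ)-N+1 = 1
        · rw [if_pos h1] at h; exact absurd h hx₁
        · rw [if_neg h1] at h; exact absurd h one_ne_zero
      · rw [show i = (⟨N + ((i:ℕ)-N+1) - 1, by omega⟩ : Fin (N+(2*M+1)-1))
            from Fin.ext (by omega : (i:ℕ) = N + ((i:ℕ)-N+1) - 1)]
        exact h

lemma jac_det_ne_zero (N M : ℕ) (hQ : 2*M+1 < N) (c : Fin (2*M+1) → ℝ)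
    (hc : ∀ m, 0 < c m) (x₁ : ℂ) (hx₁ : x₁ ≠ 0) :
    (jacPhi N M hQ c x₁ (fun m => uu N M m / pvec N M c m, fun _ => 1)).det ≠ 0 :=
  jac_det_ne_zero' N M hQ c hc x₁ hx₁ _ (Ao_ne_zero N M hQ c hc) (Be_zero N M hQ c hc)

/-- For almost every pilot symbol `x₁ ∈ ℂ` there exist `ŝ` and `x_{2:N}` such
that the Jacobian of eq. (61) has nonzero determinant. -/
theorem jacobian_nonsingular_ae (N M : ℕ) (hQ : 2 * M + 1 < N)
    (c : Fin (2 * M + 1) → ℝ) (hc : ∀ m, 0 < c m) :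
    ∀ᵐ x₁ ∂(MeasureTheory.volume : MeasureTheory.Measure ℂ),
      ∃ (s : Fin (2 * M + 1) → ℂ) (xr : Fin (N - 1) → ℂ),
        (jacPhi N M hQ c x₁ (s, xr)).det ≠ 0 := by
  have h0 : ∀ᵐ (x₁ : ℂ) ∂(MeasureTheory.volume : MeasureTheory.Measure ℂ), x₁ ≠ 0 := by
    rw [MeasureTheory.ae_iff]
    have hset : {x : ℂ | ¬ x ≠ 0} = {0} := by ext x; simp
    rw [hset]
    exact MeasureTheory.measure_singleton 0
  filter_upwards [h0] with x₁ hx₁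
  exact ⟨fun m => uu N M m / pvec N M c m, fun _ => 1, jac_det_ne_zero N M hQ c hc x₁ hx₁⟩
end
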